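/- Let P and P* be an incidence structure satisfying: every line has exactly 3 points, two distinct points lie on a unique line, two distinct lines meet in a unique point, and |P*| > 1. Define E = P ∪ {0} with addition: x + 0 = 0 + x = x, x + x = 0, and for distinct nonzero x ≠ y, x + y = z where z is the third point on the line through x and y. Then this addition is commutative and associative, making E an F₂-vector space of dimension 3. -/

import Mathlib

/-- Given an incidence structure as above and the addition on `E = P ∪ {0}`
(encoded as `Option P` with `none = 0`) defined by `x + 0 = 0 + x = x`,
`x + x = 0`, and `x + y = z` the third point of the line through two distinct
points `x ≠ y`, this addition is commutative and associative and makes `E` an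
`F₂`-vector space of dimension 3 (i.e. `E` is isomorphic, as a set with this
addition, to `(ZMod 2)³` with `none ↦ 0`). -/
theorem stmt_3 (P L : Type*) (I : P → L → Prop)
    (h3 : ∀ l : L, {p : P | I p l}.ncard = 3)
    (hpp : ∀ p q : P, p ≠ q → ∃! l : L, I p l ∧ I q l)
    (hll : ∀ l m : L, l ≠ m → ∃! p : P, I p l ∧ I p m)
    (hL : ∃ l m : L, l ≠ m)
    (add : Option P → Option P → Option P)
    (hadd0 : ∀ x : Option P, add x none = x ∧ add none x = x)
    (haddself : ∀ x : Option P, add x x = none)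
    (haddline : ∀ x y : P, x ≠ y → ∃ l : L, I x l ∧ I y l ∧
      ∃ z : P, add (some x) (some y) = some z ∧ z ≠ x ∧ z ≠ y ∧ I z l) :
    (∀ x y : Option P, add x y = add y x) ∧
    (∀ x y z : Option P, add (add x y) z = add x (add y z)) ∧
    ∃ e : Option P ≃ (Fin 3 → ZMod 2),
      e none = 0 ∧ ∀ x y : Option P, e (add x y) = e x + e y := by
  classical
  -- every line's point set is exactly any 3 distinct points on it
  have line_pts : ∀ (l : L) (x y z : P), x ≠ y → x ≠ z → y ≠ z →
      I x l → I y l → I z l → ∀ p : P, I p l → p = x ∨ p = y ∨ p = z := by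
    intro l x y z hxy hxz hyz hx hy hz p hp
    obtain ⟨a, b, c, hab, hac, hbc, hset⟩ := Set.ncard_eq_three.mp (h3 l)
    have hsub : ({x, y, z} : Set P) ⊆ {p : P | I p l} := by
      intro q hq
      rcases hq with rfl | rfl | rfl <;> assumption
    have hfin : ({p : P | I p l}).Finite := by
      rw [hset]
      exact ((Set.finite_singleton c).insert b).insert a
    have hcard : ({x, y, z} : Set P).ncard = 3 := by
      rw [Set.ncard_insert_of_notMem (by simp [hxy, hxz]),
        Set.ncard_pair hyz]
    have heq := Set.eq_of_subset_of_ncard_le hsub (by rw [h3 l, hcard]) hfin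
    have hpmem : p ∈ ({x, y, z} : Set P) := by rw [heq]; exact hp
    simpa using hpmem
  -- third point of a line through two distinct points
  have third : ∀ x y : P, x ≠ y → ∃ z : P, add (some x) (some y) = some z ∧
      z ≠ x ∧ z ≠ y ∧ ∀ l : L, I x l → I y l → I z l ∧
        ∀ p : P, I p l → p = x ∨ p = y ∨ p = z := by
    intro x y hxy
    obtain ⟨l0, hxl0, hyl0, z, hz, hzx, hzy, hzl0⟩ := haddline x y hxy
    refine ⟨z, hz, hzx, hzy, ?_⟩
    intro l hxl hyl
    obtain ⟨l1, -, hu⟩ := hpp x y hxy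
    have hle : l = l0 := (hu l ⟨hxl, hyl⟩).trans (hu l0 ⟨hxl0, hyl0⟩).symm
    subst hle
    exact ⟨hzl0, line_pts l x y z hxy (Ne.symm hzx) (Ne.symm hzy) hxl0 hyl0 hzl0⟩
  -- commutativity
  have comm : ∀ x y : Option P, add x y = add y x := by
    intro x y
    rcases x with _ | a
    · rw [(hadd0 y).2, (hadd0 y).1]
    rcases y with _ | b
    · rw [(hadd0 (some a)).2, (hadd0 (some a)).1]
    by_cases hab : a = b
    · subst hab; rfl
    · obtain ⟨z, hz, hza, hzb, hl⟩ := third a b hab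
      obtain ⟨z', hz', hz'b, hz'a, hl'⟩ := third b a (Ne.symm hab)
      obtain ⟨l, ⟨hal, hbl⟩, -⟩ := hpp a b hab
      obtain ⟨hzl, hpts⟩ := hl l hal hbl
      obtain ⟨hz'l, -⟩ := hl' l hbl hal
      rcases hpts z' hz'l with rfl | rfl | rfl
      · exact absurd rfl hz'a
      · exact absurd rfl hz'b
      · rw [hz, hz']
  -- cancellation
  have cancel : ∀ x y : Option P, add x (add x y) = y := by
    intro x y
    rcases x with _ | a
    · rw [(hadd0 y).2, (hadd0 _).2]
    rcases y with _ | b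
    · rw [(hadd0 (some a)).1, haddself]
    by_cases hab : a = b
    · subst hab; rw [haddself, (hadd0 _).1]
    · obtain ⟨z, hz, hza, hzb, hl⟩ := third a b hab
      rw [hz]
      obtain ⟨w, hw, hwa, hwz, hl'⟩ := third a z (Ne.symm hza)
      rw [hw]
      obtain ⟨l, ⟨hal, hbl⟩, -⟩ := hpp a b hab
      obtain ⟨hzl, hpts⟩ := hl l hal hbl
      obtain ⟨hwl, -⟩ := hl' l hal hzl
      rcases hpts w hwl with rfl | rfl | rfl
      · exact absurd rfl hwa
      · rfl
      · exact absurd rfl hwz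
  -- associativity
  have assoc : ∀ x y z : Option P, add (add x y) z = add x (add y z) := by
    intro x y z
    rcases x with _ | a
    · rw [(hadd0 y).2, (hadd0 (add y z)).2]
    rcases z with _ | c
    · rw [(hadd0 (add (some a) y)).1, (hadd0 y).1]
    rcases y with _ | b
    · rw [(hadd0 (some a)).1, (hadd0 (some c)).2]
    by_cases hab : a = b
    · subst hab
      rw [haddself, (hadd0 (some c)).2, cancel]
    by_cases hbc : b = c
    · subst hbc
      rw [haddself, (hadd0 (some a)).1, comm (add (some a) (some b)) (some b),
        comm (some a) (some b), cancel]
    by_cases hac : a = c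
    · subst hac
      rw [comm (add (some a) (some b)) (some a), comm (some b) (some a)]
    obtain ⟨l1, ⟨hal1, hbl1⟩, -⟩ := hpp a b hab
    obtain ⟨u, hu, hua, hub, hul⟩ := third a b hab
    obtain ⟨hul1, hpts1⟩ := hul l1 hal1 hbl1
    by_cases hcl1 : I c l1
    · -- collinear case : c = u
      have hcu : c = u := by
        rcases hpts1 c hcl1 with rfl | rfl | rfl
        · exact absurd rfl hac
        · exact absurd rfl hbc
        · rfl
      obtain ⟨v, hv, hvb, hvu, hvl⟩ := third b u (Ne.symm hub)
      obtain ⟨hvl1, -⟩ := hvl l1 hbl1 hul1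
      have hva : v = a := by
        rcases hpts1 v hvl1 with rfl | rfl | rfl
        · rfl
        · exact absurd rfl hvb
        · exact absurd rfl hvu
      rw [hu, hcu, haddself, hv, hva, haddself]
    · -- general position
      obtain ⟨l2, ⟨hbl2, hcl2⟩, -⟩ := hpp b c hbc
      obtain ⟨v, hv, hvb, hvc, hvl⟩ := third b c hbc
      obtain ⟨hvl2, hpts2⟩ := hvl l2 hbl2 hcl2
      have hal2 : ¬ I a l2 := by
        intro h
        obtain ⟨l', -, huniq⟩ := hpp a b hab
        have h12 : l2 = l1 := (huniq l2 ⟨h, hbl2⟩).trans (huniq l1 ⟨hal1, hbl1⟩).symm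
        exact hcl1 (h12 ▸ hcl2)
      have huc : u ≠ c := fun h => hcl1 (h ▸ hul1)
      have hva : v ≠ a := fun h => hal2 (h ▸ hvl2)
      have hl12 : l1 ≠ l2 := fun h => hcl1 (h ▸ hcl2)
      have huv : u ≠ v := by
        intro h
        obtain ⟨p, -, hup⟩ := hll l1 l2 hl12
        have h1 := hup u ⟨hul1, h ▸ hvl2⟩
        have h2 := hup b ⟨hbl1, hbl2⟩
        exact hub (h1.trans h2.symm)
      obtain ⟨w, hw, hwu, hwc, hwl⟩ := third u c huc
      obtain ⟨l3, ⟨hul3, hcl3⟩, -⟩ := hpp u c huc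
      obtain ⟨hwl3, hpts3⟩ := hwl l3 hul3 hcl3
      obtain ⟨w', hw', hw'a, hw'v, hw'l⟩ := third a v (Ne.symm hva)
      obtain ⟨l4, ⟨hal4, hvl4⟩, -⟩ := hpp a v (Ne.symm hva)
      obtain ⟨hw'l4, hpts4⟩ := hw'l l4 hal4 hvl4
      have hal3 : ¬ I a l3 := by
        intro h
        obtain ⟨l', -, huniq⟩ := hpp a u (Ne.symm hua)
        have h31 : l3 = l1 := (huniq l3 ⟨h, hul3⟩).trans (huniq l1 ⟨hal1, hul1⟩).symm
        exact hcl1 (h31 ▸ hcl3)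
      have hl34 : l3 ≠ l4 := fun h => hal3 (h ▸ hal4)
      obtain ⟨p, ⟨hpl3, hpl4⟩, -⟩ := hll l3 l4 hl34
      have hul4 : ¬ I u l4 := by
        intro h
        obtain ⟨l', -, huniq⟩ := hpp a u (Ne.symm hua)
        have h41 : l4 = l1 := (huniq l4 ⟨hal4, h⟩).trans (huniq l1 ⟨hal1, hul1⟩).symm
        have hvl1 : I v l1 := h41 ▸ hvl4
        rcases hpts1 v hvl1 with rfl | rfl | rfl
        · exact hva rfl
        · exact hvb rfl
        · exact huv rfl
      have hcl4 : ¬ I c l4 := by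
        intro h
        obtain ⟨l', -, huniq⟩ := hpp v c hvc
        have h42 : l4 = l2 := (huniq l4 ⟨hvl4, h⟩).trans (huniq l2 ⟨hvl2, hcl2⟩).symm
        exact hal2 (h42 ▸ hal4)
      have hvl3 : ¬ I v l3 := by
        intro h
        obtain ⟨l', -, huniq⟩ := hpp v c hvc
        have h32 : l3 = l2 := (huniq l3 ⟨h, hcl3⟩).trans (huniq l2 ⟨hvl2, hcl2⟩).symm
        have hul2 : I u l2 := h32 ▸ hul3
        rcases hpts2 u hul2 with rfl | rfl | rfl
        · exact hub rfl
        · exact huc rfl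
        · exact huv rfl
      have hpw : p = w := by
        rcases hpts3 p hpl3 with rfl | rfl | rfl
        · exact absurd hpl4 hul4
        · exact absurd hpl4 hcl4
        · rfl
      have hpw' : p = w' := by
        rcases hpts4 p hpl4 with rfl | rfl | rfl
        · exact absurd hpl3 hal3
        · exact absurd hpl3 hvl3
        · rfl
      rw [hu, hv, hw, hw']
      exact congrArg some (hpw.symm.trans hpw')
  refine ⟨comm, assoc, ?_⟩
  letI : Add (Option P) := ⟨add⟩
  letI : Zero (Option P) := ⟨none⟩
  letI : Neg (Option P) := ⟨id⟩
  letI : AddCommGroup (Option P) := {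
    add_assoc := assoc, zero_add := fun x => (hadd0 x).2,
    add_zero := fun x => (hadd0 x).1,
    neg_add_cancel := haddself, add_comm := comm,
    nsmul := nsmulRec, zsmul := zsmulRec }
  have hxx : ∀ x : Option P, x + x = 0 := haddself
  obtain ⟨l, m, hlm⟩ := hL
  obtain ⟨a, ⟨hal, ham⟩, hauniq⟩ := hll l m hlm
  have hother : ∀ (n : L) (p : P), I p n →
      ∃ q r : P, q ≠ r ∧ q ≠ p ∧ r ≠ p ∧ I q n ∧ I r n := by
    intro n p hp
    obtain ⟨x, y, z, hxy, hxz, hyz, hset⟩ := Set.ncard_eq_three.mp (h3 n)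
    have hmem : ∀ q : P, q ∈ ({x, y, z} : Set P) → I q n := by
      intro q hq
      rw [← hset] at hq
      exact hq
    have hx : I x n := hmem x (by simp)
    have hy : I y n := hmem y (by simp)
    have hz : I z n := hmem z (by simp)
    have hpm : p ∈ ({x, y, z} : Set P) := by rw [← hset]; exact hp
    simp only [Set.mem_insert_iff, Set.mem_singleton_iff] at hpm
    rcases hpm with rfl | rfl | rfl
    · exact ⟨y, z, hyz, Ne.symm hxy, Ne.symm hxz, hy, hz⟩
    · exact ⟨x, z, hxz, hxy, Ne.symm hyz, hx, hz⟩
    · exact ⟨x, y, hxy, hxz, hyz, hx, hy⟩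
  obtain ⟨b, c, hbc, hba, hca, hbl, hcl⟩ := hother l a hal
  obtain ⟨d, e0, hde, hda, hea, hdm, hem⟩ := hother m a ham
  have hbm : ¬ I b m := fun h => hba (hauniq b ⟨hbl, h⟩)
  have hcm : ¬ I c m := fun h => hca (hauniq c ⟨hcl, h⟩)
  have hdl : ¬ I d l := fun h => hda (hauniq d ⟨h, hdm⟩)
  have hel : ¬ I e0 l := fun h => hea (hauniq e0 ⟨h, hem⟩)
  have hbd : b ≠ d := fun h => hbm (h ▸ hdm)
  have hbe : b ≠ e0 := fun h => hbm (h ▸ hem)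
  have hcd : c ≠ d := fun h => hcm (h ▸ hdm)
  -- a is the third point of l through b and c
  obtain ⟨a', ha', ha'b, ha'c, ha'l⟩ := third b c hbc
  obtain ⟨ha'l1, hptsl⟩ := ha'l l hbl hcl
  have haa' : a = a' := by
    rcases hptsl a hal with rfl | rfl | rfl
    · exact absurd rfl hba
    · exact absurd rfl hca
    · rfl
  have hA : (some b : Option P) + some c = some a := by
    show add (some b) (some c) = some a
    rw [ha']
    exact congrArg some haa'.symm
  have hclsl : ∀ p : P, I p l → p = a ∨ p = b ∨ p = c := by
    intro p hp
    rcases hptsl p hp with h | h | h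
    · exact Or.inr (Or.inl h)
    · exact Or.inr (Or.inr h)
    · exact Or.inl (h.trans haa'.symm)
  -- e0 is the third point of m through a and d
  obtain ⟨e', he', he'a, he'd, he'l⟩ := third a d (Ne.symm hda)
  obtain ⟨he'm, hptsm⟩ := he'l m ham hdm
  have hee : e0 = e' := by
    rcases hptsm e0 hem with rfl | rfl | rfl
    · exact absurd rfl hea
    · exact absurd rfl hde
    · rfl
  have hclsm : ∀ p : P, I p m → p = a ∨ p = d ∨ p = e0 := by
    intro p hp
    rcases hptsm p hp with h | h | h
    · exact Or.inl h
    · exact Or.inr (Or.inl h)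
    · exact Or.inr (Or.inr (h.trans hee.symm))
  have hE : (some a : Option P) + some d = some e0 := by
    show add (some a) (some d) = some e0
    rw [he']
    exact congrArg some hee.symm
  -- g : third point of the line through c and d
  obtain ⟨g, hg, hgc, hgd, hgl⟩ := third c d hcd
  obtain ⟨n', ⟨hcn', hdn'⟩, -⟩ := hpp c d hcd
  obtain ⟨hgn', -⟩ := hgl n' hcn' hdn'
  have hbg : b ≠ g := by
    intro h
    obtain ⟨l', -, huniq⟩ := hpp b c hbc
    have hn'l : n' = l := (huniq n' ⟨h ▸ hgn', hcn'⟩).trans (huniq l ⟨hbl, hcl⟩).symm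
    exact hdl (hn'l ▸ hdn')
  have hG : (some c : Option P) + some d = some g := hg
  have hBCD : (some b : Option P) + (some c + some d) = some e0 := by
    rw [← add_assoc, hA, hE]
  have hBE : (some b : Option P) + some e0 = some g := by
    rw [← hBCD, ← add_assoc, hxx, zero_add, hG]
  -- the candidate linear bijection
  obtain ⟨φ, hφ⟩ : ∃ φ : (Fin 3 → ZMod 2) → Option P, φ = fun v =>
      (if v 0 = 1 then some b else 0) +
        ((if v 1 = 1 then some c else 0) + (if v 2 = 1 then some d else 0)) := ⟨_, rfl⟩
  have hφeval : ∀ v, φ v = (if v 0 = 1 then some b else 0) +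
      ((if v 1 = 1 then some c else 0) + (if v 2 = 1 then some d else 0)) :=
    fun v => by rw [hφ]
  have two_cases : ∀ t : ZMod 2, t = 0 ∨ t = 1 := by decide
  have hφadd : ∀ v w, φ (v + w) = φ v + φ w := by
    intro v w
    have key : ∀ (s t : ZMod 2) (x : Option P),
        (if s + t = 1 then x else 0) = (if s = 1 then x else 0) + (if t = 1 then x else 0) := by
      intro s t x
      rcases two_cases s with rfl | rfl <;> rcases two_cases t with rfl | rfl <;>
        simp [hxx]
    rw [hφeval, hφeval, hφeval]
    simp only [Pi.add_apply]
    rw [key, key, key]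
    abel
  have it1 : ∀ x : Option P, (if (1 : ZMod 2) = 1 then x else 0) = x :=
    fun x => if_pos rfl
  have it0 : ∀ x : Option P, (if (0 : ZMod 2) = 1 then x else 0) = 0 :=
    fun x => if_neg (by decide)
  have hφ0 : φ 0 = none := by
    rw [hφeval]
    simp only [Pi.zero_apply]
    rw [it0, it0, it0, zero_add, zero_add]
    rfl
  have e100 : φ ![1, 0, 0] = some b := by
    rw [hφeval,
      show (![1,0,0] : Fin 3 → ZMod 2) 0 = 1 from rfl,
      show (![1,0,0] : Fin 3 → ZMod 2) 1 = 0 from rfl,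
      show (![1,0,0] : Fin 3 → ZMod 2) 2 = 0 from rfl,
      it1, it0, it0, zero_add, add_zero]
  have e010 : φ ![0, 1, 0] = some c := by
    rw [hφeval,
      show (![0,1,0] : Fin 3 → ZMod 2) 0 = 0 from rfl,
      show (![0,1,0] : Fin 3 → ZMod 2) 1 = 1 from rfl,
      show (![0,1,0] : Fin 3 → ZMod 2) 2 = 0 from rfl,
      it1, it0, it0, add_zero, zero_add]
  have e001 : φ ![0, 0, 1] = some d := by
    rw [hφeval,
      show (![0,0,1] : Fin 3 → ZMod 2) 0 = 0 from rfl,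
      show (![0,0,1] : Fin 3 → ZMod 2) 1 = 0 from rfl,
      show (![0,0,1] : Fin 3 → ZMod 2) 2 = 1 from rfl,
      it1, it0, it0, zero_add, zero_add]
  have e110 : φ ![1, 1, 0] = some a := by
    rw [hφeval,
      show (![1,1,0] : Fin 3 → ZMod 2) 0 = 1 from rfl,
      show (![1,1,0] : Fin 3 → ZMod 2) 1 = 1 from rfl,
      show (![1,1,0] : Fin 3 → ZMod 2) 2 = 0 from rfl,
      it1, it1, it0, add_zero, hA]
  have e101 : φ ![1, 0, 1] = (some b : Option P) + some d := by
    rw [hφeval,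
      show (![1,0,1] : Fin 3 → ZMod 2) 0 = 1 from rfl,
      show (![1,0,1] : Fin 3 → ZMod 2) 1 = 0 from rfl,
      show (![1,0,1] : Fin 3 → ZMod 2) 2 = 1 from rfl,
      it1, it1, it0, zero_add]
  have e011 : φ ![0, 1, 1] = some g := by
    rw [hφeval,
      show (![0,1,1] : Fin 3 → ZMod 2) 0 = 0 from rfl,
      show (![0,1,1] : Fin 3 → ZMod 2) 1 = 1 from rfl,
      show (![0,1,1] : Fin 3 → ZMod 2) 2 = 1 from rfl,
      it1, it1, it0, zero_add, hG]
  have e111 : φ ![1, 1, 1] = some e0 := by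
    rw [hφeval,
      show (![1,1,1] : Fin 3 → ZMod 2) 0 = 1 from rfl,
      show (![1,1,1] : Fin 3 → ZMod 2) 1 = 1 from rfl,
      show (![1,1,1] : Fin 3 → ZMod 2) 2 = 1 from rfl,
      it1, it1, it1, hBCD]
  have hne : ∀ x y : P, x ≠ y → (some x : Option P) + some y ≠ 0 := by
    intro x y hxy h
    obtain ⟨z, hz, -, -, -⟩ := third x y hxy
    rw [show (some x : Option P) + some y = add (some x) (some y) from rfl, hz] at h
    exact Option.some_ne_none _ (show _ = (none : Option P) from h)
  have hker : ∀ v, φ v = 0 → v = 0 := by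
    intro v hv
    rw [hφeval] at hv
    rcases two_cases (v 0) with h0 | h0 <;> rcases two_cases (v 1) with h1 | h1 <;>
      rcases two_cases (v 2) with h2 | h2
    · funext i
      fin_cases i
      · exact h0
      · exact h1
      · exact h2
    · rw [h0, h1, h2, it0, it0, it1, zero_add, zero_add] at hv
      exact (Option.some_ne_none _ (show _ = (none : Option P) from hv)).elim
    · rw [h0, h1, h2, it0, it1, it0, add_zero, zero_add] at hv
      exact (Option.some_ne_none _ (show _ = (none : Option P) from hv)).elim
    · rw [h0, h1, h2, it0, it1, it1, zero_add] at hv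
      exact absurd hv (hne c d hcd)
    · rw [h0, h1, h2, it1, it0, it0, zero_add, add_zero] at hv
      exact (Option.some_ne_none _ (show _ = (none : Option P) from hv)).elim
    · rw [h0, h1, h2, it1, it0, it1, zero_add] at hv
      exact absurd hv (hne b d hbd)
    · rw [h0, h1, h2, it1, it1, it0, add_zero] at hv
      exact absurd hv (hne b c hbc)
    · rw [h0, h1, h2, it1, it1, it1, hG] at hv
      exact absurd hv (hne b g hbg)
  have hsurj : ∀ x : Option P, ∃ v, φ v = x := by
    intro x
    rcases x with _ | p
    · exact ⟨0, hφ0⟩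
    by_cases hpl : I p l
    · rcases hclsl p hpl with h | h | h
      · exact ⟨![1, 1, 0], by rw [e110, h]⟩
      · exact ⟨![1, 0, 0], by rw [e100, h]⟩
      · exact ⟨![0, 1, 0], by rw [e010, h]⟩
    by_cases hpm' : I p m
    · rcases hclsm p hpm' with h | h | h
      · exact ⟨![1, 1, 0], by rw [e110, h]⟩
      · exact ⟨![0, 0, 1], by rw [e001, h]⟩
      · exact ⟨![1, 1, 1], by rw [e111, h]⟩
    · have hpb : p ≠ b := fun h => hpl (h ▸ hbl)
      obtain ⟨n, ⟨hpn, hbn⟩, -⟩ := hpp p b hpb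
      have hnm : n ≠ m := fun h => hbm (h ▸ hbn)
      obtain ⟨q, ⟨hqn, hqm⟩, -⟩ := hll n m hnm
      rcases hclsm q hqm with h | h | h
      · exfalso
        obtain ⟨l', -, huniq⟩ := hpp a b (Ne.symm hba)
        have hqan : I a n := h ▸ hqn
        have hnl : n = l := (huniq n ⟨hqan, hbn⟩).trans (huniq l ⟨hal, hbl⟩).symm
        exact hpl (hnl ▸ hpn)
      · obtain ⟨f, hf, hfb, hfd, hfl⟩ := third b d hbd
        have hqdn : I d n := h ▸ hqn
        obtain ⟨hfn, hptsn⟩ := hfl n hbn hqdn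
        rcases hptsn p hpn with h' | h' | h'
        · exact absurd (by rw [h']; exact hbl) hpl
        · exact absurd (by rw [h']; exact hdm) hpm'
        · exact ⟨![1, 0, 1], by rw [e101, h']; exact hf⟩
      · obtain ⟨g2, hg2, hg2b, hg2e, hg2l⟩ := third b e0 hbe
        have hqen : I e0 n := h ▸ hqn
        obtain ⟨hg2n, hptsn⟩ := hg2l n hbn hqen
        have hg2g : g2 = g := by
          have hsome : (some g2 : Option P) = some g := by
            rw [← hBE]
            exact hg2.symm
          exact Option.some.inj hsome
        rcases hptsn p hpn with h' | h' | h'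
        · exact absurd (by rw [h']; exact hbl) hpl
        · exact absurd (by rw [h']; exact hem) hpm'
        · exact ⟨![0, 1, 1], by rw [e011, h', hg2g]⟩
  have hinj : Function.Injective φ := by
    intro v w h
    have h0 : φ (v + w) = 0 := by rw [hφadd, h, hxx]
    have hvw := hker _ h0
    funext i
    have hii := congrFun hvw i
    simp only [Pi.add_apply, Pi.zero_apply] at hii
    rcases two_cases (v i) with h1 | h1 <;> rcases two_cases (w i) with h2 | h2 <;>
      rw [h1, h2] at hii ⊢ <;>
      first
        | rfl
        | exact absurd hii (by decide)
  have hbij : Function.Bijective φ := ⟨hinj, fun x => hsurj x⟩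
  have hS : ∀ u, (Equiv.ofBijective φ hbij).symm (φ u) = u :=
    fun u => (Equiv.ofBijective φ hbij).symm_apply_apply u
  refine ⟨(Equiv.ofBijective φ hbij).symm, ?_, ?_⟩
  · rw [← hφ0]
    exact hS 0
  · intro x y
    obtain ⟨v, rfl⟩ := hsurj x
    obtain ⟨w, rfl⟩ := hsurj y
    rw [show add (φ v) (φ w) = φ (v + w) from (hφadd v w).symm, hS, hS, hS]
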